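/- arXiv:2412.01475 — 5 statements merged into one kernel-verified Lean document; each statement's English description precedes it below -/
import Mathlib

section
/- For p ∈ (-1, 0), the function t ↦ (t^(-p) - 1)^(-1/p) is convex on the interval (1, ∞). -/
theorem convexOn_rpow_sub_one_rpow (p : ℝ) (hp1 : -1 < p) (hp0 : p < 0) :
    ConvexOn ℝ (Set.Ioi (1 : ℝ)) (fun t : ℝ => (t ^ (-p) - 1) ^ (-1 / p)) := by
  have hp : p ≠ 0 := hp0.ne
  set f : ℝ → ℝ := fun t => (t ^ (-p) - 1) ^ (-1 / p) with hf
  set f' : ℝ → ℝ := fun t => (t ^ (-p) - 1) ^ (-1 / p - 1) * t ^ (-p - 1) with hf'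
  set f'' : ℝ → ℝ := fun t => (1 + p) * (t ^ (-p) - 1) ^ (-1 / p - 2) * t ^ (-p - 2) with hf''
  have key : ∀ x ∈ Set.Ioi (1 : ℝ), 0 < x ∧ 0 < x ^ (-p) - 1 := by
    intro x hx
    have hx1 : (1 : ℝ) < x := hx
    have hx0 : (0 : ℝ) < x := lt_trans one_pos hx1
    refine ⟨hx0, ?_⟩
    have : (1 : ℝ) < x ^ (-p) := (Real.one_lt_rpow_iff_of_pos hx0).2 (Or.inl ⟨hx1, by linarith⟩)
    linarith
  have hd1 : ∀ x ∈ Set.Ioi (1 : ℝ), HasDerivAt f (f' x) x := by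
    intro x hx
    obtain ⟨hx0, hu⟩ := key x hx
    have h2 : HasDerivAt (fun t : ℝ => t ^ (-p) - 1) (-p * x ^ (-p - 1)) x :=
      (Real.hasDerivAt_rpow_const (Or.inl hx0.ne')).sub_const 1
    have h3 : HasDerivAt (fun u : ℝ => u ^ (-1 / p))
        (-1 / p * (x ^ (-p) - 1) ^ (-1 / p - 1)) (x ^ (-p) - 1) :=
      Real.hasDerivAt_rpow_const (Or.inl hu.ne')
    have := h3.comp x h2
    refine this.congr_deriv ?_
    simp only [hf']
    field_simp
  have hd2 : ∀ x ∈ Set.Ioi (1 : ℝ), HasDerivAt f' (f'' x) x := by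
    intro x hx
    obtain ⟨hx0, hu⟩ := key x hx
    have h2 : HasDerivAt (fun t : ℝ => t ^ (-p) - 1) (-p * x ^ (-p - 1)) x :=
      (Real.hasDerivAt_rpow_const (Or.inl hx0.ne')).sub_const 1
    have g1 : HasDerivAt (fun t : ℝ => (t ^ (-p) - 1) ^ (-1 / p - 1))
        ((-1 / p - 1) * (x ^ (-p) - 1) ^ (-1 / p - 1 - 1) * (-p * x ^ (-p - 1))) x := by
      have h3 : HasDerivAt (fun u : ℝ => u ^ (-1 / p - 1))
          ((-1 / p - 1) * (x ^ (-p) - 1) ^ (-1 / p - 1 - 1)) (x ^ (-p) - 1) :=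
        Real.hasDerivAt_rpow_const (Or.inl hu.ne')
      exact h3.comp x h2
    have g2 : HasDerivAt (fun t : ℝ => t ^ (-p - 1)) ((-p - 1) * x ^ (-p - 1 - 1)) x :=
      Real.hasDerivAt_rpow_const (Or.inl hx0.ne')
    have := g1.mul g2
    refine this.congr_deriv ?_
    have e1 : x ^ (-p - 1) * x ^ (-p - 1) = (x ^ (-p) - 1 + 1) * x ^ (-p - 2) := by
      rw [← Real.rpow_add hx0]
      norm_num
      rw [show -p - 1 + (-p - 1) = -p + (-p - 2) by ring, Real.rpow_add hx0]
    have e2 : (x ^ (-p) - 1) ^ (-1 / p - 1) = (x ^ (-p) - 1) ^ (-1 / p - 2) * (x ^ (-p) - 1) := by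
      rw [show -1 / p - 1 = (-1 / p - 2) + 1 by ring, Real.rpow_add_one hu.ne']
    have e3 : (-1 / p - 1 - 1 : ℝ) = -1 / p - 2 := by ring
    have e4 : (-p - 1 - 1 : ℝ) = -p - 2 := by ring
    rw [e3, e4, e2]
    simp only [hf'']
    have e5 : (-1 / p - 1) * (-p) = 1 + p := by field_simp; ring
    rw [show (-1 / p - 1) * (x ^ (-p) - 1) ^ (-1 / p - 2) * (-p * x ^ (-p - 1)) * x ^ (-p - 1)
        = (-1 / p - 1) * (-p) * ((x ^ (-p) - 1) ^ (-1 / p - 2) * (x ^ (-p - 1) * x ^ (-p - 1)))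
        from by ring, e5, e1]
    ring
  have hcont : ContinuousOn f (Set.Ioi (1 : ℝ)) :=
    fun x hx => (hd1 x hx).continuousAt.continuousWithinAt
  refine convexOn_of_hasDerivWithinAt2_nonneg (f' := f') (f'' := f'') (convex_Ioi 1) hcont ?_ ?_ ?_
  · intro x hx
    rw [interior_Ioi] at hx
    exact ((hd1 x hx).hasDerivWithinAt)
  · intro x hx
    rw [interior_Ioi] at hx
    exact ((hd2 x hx).hasDerivWithinAt)
  · intro x hx
    rw [interior_Ioi] at hx
    obtain ⟨hx0, hu⟩ := key x hx
    have h1 : (0 : ℝ) < 1 + p := by linarith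
    simp only [hf'']
    positivity
end

section
/- Let K_m ⊆ ℝⁿ be convex bodies converging to a convex body K in the Hausdorff metric, let p ∈ (-1, 0), and let x be a unit vector. Then ∫_{⟨x⟩^⊥} X_x K_m(y)^(1+p) dy converges to ∫_{⟨x⟩^⊥} X_x K(y)^(1+p) dy, where X_x C(y) is the length of the chord C ∩ (y + ⟨x⟩). -/
open MeasureTheory Metric Filter Set

variable {n : ℕ}

def chordSet (x : EuclideanSpace ℝ (Fin n)) (C : Set (EuclideanSpace ℝ (Fin n)))
    (y : EuclideanSpace ℝ (Fin n)) : Set ℝ := {t | y + t • x ∈ C}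

lemma combo_line (x y : EuclideanSpace ℝ (Fin n)) {a b s t : ℝ} (hab : a + b = 1) :
    a • (y + s • x) + b • (y + t • x) = y + (a * s + b * t) • x := by
  match_scalars <;> ring_nf <;> linarith

lemma chordSet_convex {x y : EuclideanSpace ℝ (Fin n)} {C : Set (EuclideanSpace ℝ (Fin n))}
    (hC : Convex ℝ C) : Convex ℝ (chordSet x C y) := by
  intro s hs t ht a b ha hb hab
  have h := hC hs ht ha hb hab
  show y + (a * s + b * t) • x ∈ C
  rwa [← combo_line x y hab]

lemma isClosed_chordSet {x y : EuclideanSpace ℝ (Fin n)} {C : Set (EuclideanSpace ℝ (Fin n))}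
    (hC : IsClosed C) : IsClosed (chordSet x C y) :=
  hC.preimage (by continuity)

lemma isOpen_chordSet {x y : EuclideanSpace ℝ (Fin n)} {C : Set (EuclideanSpace ℝ (Fin n))}
    (hC : IsOpen C) : IsOpen (chordSet x C y) :=
  hC.preimage (by continuity)

lemma norm_line_sq {x y : EuclideanSpace ℝ (Fin n)} (hx : ‖x‖ = 1)
    (hy : inner ℝ x y = (0:ℝ)) (t : ℝ) : ‖y + t • x‖ ^ 2 = ‖y‖ ^ 2 + t ^ 2 := by
  have h1 : inner ℝ y (t • x) = (0:ℝ) := by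
    rw [real_inner_smul_right, real_inner_comm, hy, mul_zero]
  have := norm_add_sq_real y (t • x)
  rw [h1] at this
  simp only [norm_smul, Real.norm_eq_abs, hx, mul_one] at this
  rw [this]; ring_nf; rw [sq_abs]

lemma abs_le_of_line {x y : EuclideanSpace ℝ (Fin n)} (hx : ‖x‖ = 1)
    (hy : inner ℝ x y = (0:ℝ)) (t : ℝ) : |t| ≤ ‖y + t • x‖ ∧ ‖y‖ ≤ ‖y + t • x‖ := by
  have h := norm_line_sq hx hy t
  constructor <;> nlinarith [norm_nonneg (y + t • x), norm_nonneg y, abs_nonneg t, sq_abs t]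

lemma chordSet_subset_Icc {x y : EuclideanSpace ℝ (Fin n)} {C : Set (EuclideanSpace ℝ (Fin n))}
    {R : ℝ} (hx : ‖x‖ = 1) (hy : inner ℝ x y = (0:ℝ)) (hC : C ⊆ closedBall 0 R) :
    chordSet x C y ⊆ Icc (-R) R := by
  intro t ht
  have h1 : ‖y + t • x‖ ≤ R := by simpa [dist_eq_norm] using hC ht
  have h2 := (abs_le_of_line hx hy t).1
  rw [mem_Icc, ← abs_le]; linarith

lemma chordSet_eq_empty {x y : EuclideanSpace ℝ (Fin n)} {C : Set (EuclideanSpace ℝ (Fin n))}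
    {R : ℝ} (hx : ‖x‖ = 1) (hy : inner ℝ x y = (0:ℝ)) (hC : C ⊆ closedBall 0 R)
    (hyR : R < ‖y‖) : chordSet x C y = ∅ := by
  ext t
  simp only [mem_empty_iff_false, iff_false]
  intro ht
  have h1 : ‖y + t • x‖ ≤ R := by simpa [dist_eq_norm] using hC ht
  have h2 := (abs_le_of_line hx hy t).2
  linarith

lemma volume_chordSet_lt_top {x y : EuclideanSpace ℝ (Fin n)} {C : Set (EuclideanSpace ℝ (Fin n))}
    {R : ℝ} (hx : ‖x‖ = 1) (hy : inner ℝ x y = (0:ℝ)) (hC : C ⊆ closedBall 0 R) :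
    volume (chordSet x C y) ≠ ⊤ :=
  ((measure_mono (chordSet_subset_Icc hx hy hC)).trans_lt (by simp)).ne

lemma volume_chordSet_toReal_le {x y : EuclideanSpace ℝ (Fin n)} {C : Set (EuclideanSpace ℝ (Fin n))}
    {R : ℝ} (hx : ‖x‖ = 1) (hy : inner ℝ x y = (0:ℝ)) (hC : C ⊆ closedBall 0 R) (hR : 0 ≤ R) :
    (volume (chordSet x C y)).toReal ≤ 2 * R := by
  have h := measure_mono (chordSet_subset_Icc hx hy hC) (μ := volume)
  have : (volume (Icc (-R) R)).toReal = 2 * R := by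
    rw [Real.volume_Icc, ENNReal.toReal_ofReal (by linarith)]; ring
  rw [← this]
  exact ENNReal.toReal_mono (by simp) h



lemma measurable_volume_chordSet (x : EuclideanSpace ℝ (Fin n))
    {C : Set (EuclideanSpace ℝ (Fin n))} (hC : MeasurableSet C) :
    Measurable (fun y : ((ℝ ∙ x)ᗮ : Submodule ℝ (EuclideanSpace ℝ (Fin n))) =>
      volume (chordSet x C (y : EuclideanSpace ℝ (Fin n)))) := by
  have hcont : Continuous (fun p : ((ℝ ∙ x)ᗮ : Submodule ℝ (EuclideanSpace ℝ (Fin n))) × ℝ =>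
      (p.1 : EuclideanSpace ℝ (Fin n)) + p.2 • x) := by fun_prop
  exact measurable_measure_prodMk_left (hcont.measurable hC)

lemma subset_cthickening_of_hausdorffDist {A B : Set (EuclideanSpace ℝ (Fin n))} {δ : ℝ}
    (hB : B.Nonempty) (hAB : EMetric.hausdorffEdist A B ≠ ⊤) (h : hausdorffDist A B ≤ δ) :
    A ⊆ cthickening δ B := by
  intro z hz
  rw [mem_cthickening_iff]
  have h1 : infDist z B ≤ δ := (infDist_le_hausdorffDist_of_mem hz hAB).trans h
  have h2 : EMetric.infEdist z B ≠ ⊤ := Metric.infEdist_ne_top hB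
  rw [infDist] at h1
  calc EMetric.infEdist z B = ENNReal.ofReal (EMetric.infEdist z B).toReal :=
        (ENNReal.ofReal_toReal h2).symm
    _ ≤ ENNReal.ofReal δ := ENNReal.ofReal_le_ofReal h1

lemma mem_of_closedBall_subset {C D : Set (EuclideanSpace ℝ (Fin n))}
    (hC : Convex ℝ C) (hCc : IsClosed C) (hCn : C.Nonempty) {s : EuclideanSpace ℝ (Fin n)}
    {r δ : ℝ} (hr : 0 < r) (hδr : δ < r)
    (hball : closedBall s r ⊆ D) (hDC : D ⊆ cthickening δ C) : s ∈ C := by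
  rcases lt_or_ge δ 0 with hδ0 | hδ0
  · have := hDC (hball (mem_closedBall_self hr.le))
    rwa [cthickening_of_nonpos hδ0.le, hCc.closure_eq] at this
  by_contra hs
  obtain ⟨w, hw, hmin⟩ := exists_norm_eq_iInf_of_complete_convex hCn hCc.isComplete hC s
  have hineq := (norm_eq_iInf_iff_real_inner_le_zero hC hw).1 hmin
  set d := ‖s - w‖ with hd
  have hd0 : 0 < d := by
    rw [hd, norm_pos_iff, sub_ne_zero]
    rintro rfl; exact hs hw
  set q := s + (r * d⁻¹) • (s - w) with hq
  have hqD : q ∈ D := by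
    apply hball
    simp only [mem_closedBall, dist_eq_norm, hq, add_sub_cancel_left, norm_smul,
      Real.norm_eq_abs]
    rw [abs_of_nonneg (by positivity)]
    rw [← hd]
    field_simp
    exact le_rfl
  have hkey : ∀ a ∈ C, r ≤ dist q a := by
    intro a ha
    have h1 : (inner ℝ (s - w) (a - w) : ℝ) ≤ 0 := hineq a ha
    have hqa : q - a = (s - w) + (w - a) + (r * d⁻¹) • (s - w) := by
      rw [hq]; abel
    have h2 : (inner ℝ (s - w) (q - a) : ℝ) =
        d ^ 2 + inner ℝ (s - w) (w - a) + (r * d⁻¹) * d ^ 2 := by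
      rw [hqa, inner_add_right, inner_add_right, real_inner_smul_right,
        real_inner_self_eq_norm_sq, ← hd]
    have h3 : (inner ℝ (s - w) (w - a) : ℝ) = - inner ℝ (s - w) (a - w) := by
      rw [← inner_neg_right, neg_sub]
    have h4 : (inner ℝ (s - w) (q - a) : ℝ) ≤ d * ‖q - a‖ := by
      have := real_inner_le_norm (s - w) (q - a)
      rwa [← hd] at this
    have h5 : d * (d + r) ≤ d * ‖q - a‖ := by
      have hinv : (r * d⁻¹) * d ^ 2 = r * d := by field_simp
      nlinarith [h2, h3, h1, h4]
    have h6 : d + r ≤ ‖q - a‖ := le_of_mul_le_mul_left (by linarith) hd0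
    rw [dist_eq_norm]; linarith
  have h7 : r ≤ infDist q C := by
    by_contra hlt
    obtain ⟨a, ha, hda⟩ := (infDist_lt_iff hCn).1 (not_le.1 hlt)
    exact absurd (hkey a ha) (not_le.2 hda)
  have h8 : infDist q C ≤ δ := by
    have := hDC hqD
    rw [mem_cthickening_iff] at this
    have h9 := ENNReal.toReal_mono (by simp) this
    rwa [ENNReal.toReal_ofReal hδ0, ← infDist] at h9
  linarith



lemma x_mem_orth_orth (x : EuclideanSpace ℝ (Fin n)) :
    x ∈ ((ℝ ∙ x)ᗮ)ᗮ := by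
  rw [Submodule.orthogonal_orthogonal]
  exact Submodule.mem_span_singleton_self x

lemma orthProj_line (x : EuclideanSpace ℝ (Fin n))
    (y : ((ℝ ∙ x)ᗮ : Submodule ℝ (EuclideanSpace ℝ (Fin n)))) (t : ℝ) :
    Submodule.orthogonalProjection (ℝ ∙ x)ᗮ ((y : EuclideanSpace ℝ (Fin n)) + t • x) = y := by
  rw [map_add, Submodule.orthogonalProjection_mem_subspace_eq_self,
    Submodule.orthogonalProjectionOnto_apply_of_mem_orthogonal
      (Submodule.smul_mem _ t (x_mem_orth_orth x)), add_zero]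

lemma exists_decomp_line (x : EuclideanSpace ℝ (Fin n)) (k : EuclideanSpace ℝ (Fin n)) :
    ∃ t : ℝ, k = ((Submodule.orthogonalProjection (ℝ ∙ x)ᗮ k : EuclideanSpace ℝ (Fin n))) + t • x := by
  have h : k - Submodule.orthogonalProjection (ℝ ∙ x)ᗮ k ∈ ((ℝ ∙ x)ᗮ)ᗮ :=
    Submodule.sub_starProjection_mem_orthogonal k
  rw [Submodule.orthogonal_orthogonal, Submodule.mem_span_singleton] at h
  obtain ⟨c, hc⟩ := h
  exact ⟨c, by rw [hc]; abel⟩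

lemma mem_proj_image_iff {x : EuclideanSpace ℝ (Fin n)} {C : Set (EuclideanSpace ℝ (Fin n))}
    {y : ((ℝ ∙ x)ᗮ : Submodule ℝ (EuclideanSpace ℝ (Fin n)))} :
    y ∈ (Submodule.orthogonalProjection (ℝ ∙ x)ᗮ '' C) ↔ ∃ t : ℝ, (y : EuclideanSpace ℝ (Fin n)) + t • x ∈ C := by
  constructor
  · rintro ⟨k, hk, rfl⟩
    obtain ⟨t, ht⟩ := exists_decomp_line x k
    exact ⟨t, by rw [← ht]; exact hk⟩
  · rintro ⟨t, ht⟩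
    exact ⟨(y : EuclideanSpace ℝ (Fin n)) + t • x, ht, orthProj_line x y t⟩

lemma exists_interior_line {x : EuclideanSpace ℝ (Fin n)} {K : Set (EuclideanSpace ℝ (Fin n))}
    (hK : Convex ℝ K) {z : EuclideanSpace ℝ (Fin n)} (hz : z ∈ interior K)
    {y : ((ℝ ∙ x)ᗮ : Submodule ℝ (EuclideanSpace ℝ (Fin n)))}
    (hy : y ∈ interior (Submodule.orthogonalProjection (ℝ ∙ x)ᗮ '' K)) :
    ∃ t : ℝ, (y : EuclideanSpace ℝ (Fin n)) + t • x ∈ interior K := by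
  classical
  set π := Submodule.orthogonalProjection (ℝ ∙ x)ᗮ
  set y' := π z with hy'
  obtain ⟨c, hc⟩ := exists_decomp_line x z
  by_cases hyy : y' = y
  · exact ⟨c, by rw [← hyy, ← hc]; exact hz⟩
  · obtain ⟨η, hη, hball⟩ := Metric.isOpen_iff.1 isOpen_interior y hy
    have hne : (0:ℝ) < ‖y - y'‖ := by
      rw [norm_pos_iff, sub_ne_zero]; exact fun h => hyy h.symm
    set θ := η / (2 * ‖y - y'‖) with hθ
    clear_value θ
    have hθ0 : 0 < θ := by rw [hθ]; positivity
    set y2 := y + θ • (y - y') with hy2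
    clear_value y2
    have hy2P : y2 ∈ (π '' K) := by
      apply interior_subset
      apply hball
      rw [mem_ball, dist_eq_norm, hy2, add_sub_cancel_left, norm_smul, Real.norm_eq_abs,
        abs_of_pos hθ0]
      have hne2 : ‖(y : EuclideanSpace ℝ (Fin n)) - (y' : EuclideanSpace ℝ (Fin n))‖ ≠ 0 := by
        rw [← Submodule.coe_sub]; exact hne.ne'
      have hprod : θ * ‖y - y'‖ = η / 2 := by
        rw [hθ]; field_simp
      nlinarith [hprod]
    obtain ⟨t2, ht2⟩ := mem_proj_image_iff.1 hy2P
    set μ := (1 + θ)⁻¹ with hμ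
    clear_value μ
    have hμpos : 0 < μ := by rw [hμ]; positivity
    have hμ1 : μ * (1 + θ) = 1 := by rw [hμ]; exact inv_mul_cancel₀ (by positivity)
    have ha : 0 < 1 - μ := by
      rw [sub_pos, hμ, inv_lt_one_iff₀]
      right; linarith
    have hw : (1 - μ) • z + μ • ((y2 : EuclideanSpace ℝ (Fin n)) + t2 • x) ∈ interior K :=
      hK.combo_interior_self_mem_interior hz ht2 ha hμpos.le (by ring)
    refine ⟨(1 - μ) * c + μ * t2, ?_⟩
    have hcoe : (y2 : EuclideanSpace ℝ (Fin n)) =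
        (y : EuclideanSpace ℝ (Fin n)) + θ • ((y : EuclideanSpace ℝ (Fin n)) - (y' : EuclideanSpace ℝ (Fin n))) := by
      rw [hy2]; push_cast; ring_nf
    have hgoal : (1 - μ) • z + μ • ((y2 : EuclideanSpace ℝ (Fin n)) + t2 • x) =
        (y : EuclideanSpace ℝ (Fin n)) + ((1 - μ) * c + μ * t2) • x := by
      rw [hc, hcoe]
      match_scalars
      all_goals try linear_combination hμ1
      all_goals try linear_combination -hμ1
      all_goals try linear_combination c * hμ1 - c - θ * c * hμ1
      all_goals try ring
      all_goals try linear_combination (θ * c) * hμ1 - c * hμ1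
      all_goals try linear_combination -c * hμ1 + θ*c*hμ1
    rwa [hgoal] at hw



-- chord K ⊆ closure (chord (interior K))
lemma chordSet_subset_closure {x y : EuclideanSpace ℝ (Fin n)} {K : Set (EuclideanSpace ℝ (Fin n))}
    (hK : Convex ℝ K) {t0 : ℝ} (ht0 : t0 ∈ chordSet x (interior K) y) :
    chordSet x K y ⊆ closure (chordSet x (interior K) y) := by
  intro t ht
  apply mem_closure_iff_seq_limit.2
  refine ⟨fun j => ((j : ℝ) + 1)⁻¹ * t0 + (1 - ((j : ℝ) + 1)⁻¹) * t, fun j => ?_, ?_⟩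
  · have haj : (0:ℝ) < ((j : ℝ) + 1)⁻¹ := by positivity
    have hbj : (0:ℝ) ≤ 1 - ((j : ℝ) + 1)⁻¹ := by
      have : ((j : ℝ) + 1)⁻¹ ≤ 1 := by
        rw [inv_le_one_iff₀]; right; simp
      linarith
    have hmem := hK.combo_interior_self_mem_interior ht0 ht haj hbj (by ring)
    show y + (((j : ℝ) + 1)⁻¹ * t0 + (1 - ((j : ℝ) + 1)⁻¹) * t) • x ∈ interior K
    rwa [← combo_line x y (by ring : ((j : ℝ) + 1)⁻¹ + (1 - ((j : ℝ) + 1)⁻¹) = 1)]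
  · have hinv : Tendsto (fun j : ℕ => ((j : ℝ) + 1)⁻¹) atTop (nhds 0) :=
      tendsto_one_div_add_atTop_nhds_zero_nat.congr (by intro j; rw [one_div])
    have h1 := (hinv.mul_const t0).add (((tendsto_const_nhds (x := (1:ℝ))).sub hinv).mul_const t)
    simpa using h1

lemma volume_chordSet_interior_eq {x y : EuclideanSpace ℝ (Fin n)}
    {K : Set (EuclideanSpace ℝ (Fin n))} (hK : Convex ℝ K) {t0 : ℝ}
    (ht0 : t0 ∈ chordSet x (interior K) y) :
    volume (chordSet x (interior K) y) = volume (chordSet x K y) := by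
  have hsub : chordSet x (interior K) y ⊆ chordSet x K y := fun t ht => show y + t • x ∈ K from interior_subset ht
  refine le_antisymm (measure_mono hsub) ?_
  calc volume (chordSet x K y) ≤ volume (closure (chordSet x (interior K) y)) :=
        measure_mono (chordSet_subset_closure hK ht0)
    _ ≤ volume (chordSet x (interior K) y) + volume (frontier (chordSet x (interior K) y)) := by
        rw [closure_eq_self_union_frontier]
        exact measure_union_le _ _
    _ = volume (chordSet x (interior K) y) := by
        have hf := Convex.addHaar_frontier (μ := volume) (chordSet_convex (x := x) (y := y) hK.interior)
        rw [hf, add_zero]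

-- cthickening convergence
lemma iInter_cthickening_inv (K : Set (EuclideanSpace ℝ (Fin n))) (hKcl : IsClosed K) :
    ⋂ j : ℕ, cthickening ((j : ℝ) + 1)⁻¹ K = K := by
  apply Subset.antisymm
  · intro z hz
    simp only [mem_iInter, mem_cthickening_iff] at hz
    have h0 : Metric.infEDist z K = 0 := by
      have hr : Tendsto (fun j : ℕ => ((j : ℝ) + 1)⁻¹) atTop (nhds 0) :=
        tendsto_one_div_add_atTop_nhds_zero_nat.congr (by intro j; rw [one_div])
      have hlim : Tendsto (fun j : ℕ => ENNReal.ofReal ((j:ℝ)+1)⁻¹) atTop (nhds 0) := by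
        have := (ENNReal.continuous_ofReal.tendsto 0).comp hr
        simpa [Function.comp_def] using this
      exact le_antisymm (ge_of_tendsto' hlim fun j => hz j) zero_le
    rw [← Metric.mem_closure_iff_infEDist_zero, hKcl.closure_eq] at h0
    exact h0
  · exact subset_iInter fun j => self_subset_cthickening K


lemma chordSet_mono {x y : EuclideanSpace ℝ (Fin n)} {C D : Set (EuclideanSpace ℝ (Fin n))}
    (h : C ⊆ D) : chordSet x C y ⊆ chordSet x D y := fun _ ht => h ht

lemma inner_orth {x : EuclideanSpace ℝ (Fin n)}
    (y : ((ℝ ∙ x)ᗮ : Submodule ℝ (EuclideanSpace ℝ (Fin n)))) :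
    inner ℝ x (y : EuclideanSpace ℝ (Fin n)) = (0:ℝ) :=
  y.2 x (Submodule.mem_span_singleton_self x)

lemma pointwise_tendsto {x : EuclideanSpace ℝ (Fin n)} (hx : ‖x‖ = 1)
    {Km : ℕ → Set (EuclideanSpace ℝ (Fin n))} {K : Set (EuclideanSpace ℝ (Fin n))}
    (hKm : ∀ m, Convex ℝ (Km m)) (hKmc : ∀ m, IsCompact (Km m))
    (hKmn : ∀ m, (Km m).Nonempty)
    (hK : Convex ℝ K) (hKc : IsCompact K) (hKi : (interior K).Nonempty)
    (hconv : Filter.Tendsto (fun m => Metric.hausdorffDist (Km m) K) Filter.atTop (nhds 0))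
    {R : ℝ} (hR : 0 ≤ R) (hRK : K ⊆ closedBall 0 R)
    (y : ((ℝ ∙ x)ᗮ : Submodule ℝ (EuclideanSpace ℝ (Fin n))))
    (hy : y ∈ interior (Submodule.orthogonalProjection (ℝ ∙ x)ᗮ '' K) ∨
      y ∉ (Submodule.orthogonalProjection (ℝ ∙ x)ᗮ '' K)) :
    Tendsto (fun m => (volume (chordSet x (Km m) (y : EuclideanSpace ℝ (Fin n)))).toReal) atTop
      (nhds (volume (chordSet x K (y : EuclideanSpace ℝ (Fin n)))).toReal) := by
  have hKne : K.Nonempty := hKi.mono interior_subset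
  have hinner : inner ℝ x (y : EuclideanSpace ℝ (Fin n)) = (0:ℝ) := inner_orth y
  have hEdist : ∀ m, EMetric.hausdorffEdist (Km m) K ≠ ⊤ := fun m =>
    Metric.hausdorffEdist_ne_top_of_nonempty_of_bounded (hKmn m) hKne
      (hKmc m).isBounded hKc.isBounded
  have hthick1 : cthickening 1 K ⊆ closedBall 0 (1 + R) := by
    refine (cthickening_subset_of_subset 1 hRK).trans ?_
    rw [cthickening_closedBall zero_le_one hR]
  have hfin : ∀ C : Set (EuclideanSpace ℝ (Fin n)), C ⊆ cthickening 1 K →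
      volume (chordSet x C (y : EuclideanSpace ℝ (Fin n))) ≠ ⊤ := fun C hC =>
    volume_chordSet_lt_top hx hinner (hC.trans hthick1)
  set ℓE := volume (chordSet x K (y : EuclideanSpace ℝ (Fin n))) with hℓE
  have hℓfin : ℓE ≠ ⊤ := volume_chordSet_lt_top hx hinner hRK
  set ℓ := ℓE.toReal with hℓ
  set A : ℕ → Set ℝ := fun j =>
    chordSet x (cthickening ((j : ℝ) + 1)⁻¹ K) (y : EuclideanSpace ℝ (Fin n)) with hA
  have hAtend : Tendsto (fun j => volume (A j)) atTop (nhds ℓE) := by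
    have h1 : ⋂ j, A j = chordSet x K (y : EuclideanSpace ℝ (Fin n)) := by
      have h0 : ⋂ j, A j = chordSet x (⋂ j : ℕ, cthickening ((j : ℝ) + 1)⁻¹ K)
          (y : EuclideanSpace ℝ (Fin n)) := by
        ext t; simp [hA, chordSet, mem_iInter]
      rw [h0, iInter_cthickening_inv K hKc.isClosed]
    have h2 := tendsto_measure_iInter_atTop (μ := volume) (s := A)
      (fun j => (isClosed_chordSet isClosed_cthickening).measurableSet.nullMeasurableSet)
      (fun j k hjk => chordSet_mono (cthickening_mono (by
        have hc : ((j:ℝ)) ≤ k := Nat.cast_le.2 hjk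
        gcongr
        all_goals first | positivity | linarith) K))
      ⟨0, hfin _ (cthickening_mono (by norm_num) K)⟩
    rwa [h1] at h2
  rw [Metric.tendsto_nhds]
  intro ε hε
  have hup : ∀ᶠ m in atTop,
      (volume (chordSet x (Km m) (y : EuclideanSpace ℝ (Fin n)))).toReal ≤ ℓ + ε / 2 := by
    have hlt : ℓE < ℓE + ENNReal.ofReal (ε / 2) :=
      ENNReal.lt_add_right hℓfin (by simp only [ne_eq, ENNReal.ofReal_eq_zero, not_le]; linarith)
    obtain ⟨j0, hj0⟩ := (hAtend.eventually_lt_const hlt).exists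
    have hδpos : (0:ℝ) < ((j0 : ℝ) + 1)⁻¹ := by positivity
    filter_upwards [hconv.eventually_lt_const hδpos] with m hm
    have hsub : Km m ⊆ cthickening ((j0 : ℝ) + 1)⁻¹ K :=
      subset_cthickening_of_hausdorffDist hKne (hEdist m) hm.le
    have hmono : volume (chordSet x (Km m) (y : EuclideanSpace ℝ (Fin n))) ≤
        ℓE + ENNReal.ofReal (ε / 2) :=
      (measure_mono (chordSet_mono hsub)).trans hj0.le
    have hfin2 : ℓE + ENNReal.ofReal (ε / 2) ≠ ⊤ :=
      ENNReal.add_ne_top.2 ⟨hℓfin, ENNReal.ofReal_ne_top⟩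
    calc (volume (chordSet x (Km m) (y : EuclideanSpace ℝ (Fin n)))).toReal
        ≤ (ℓE + ENNReal.ofReal (ε / 2)).toReal := ENNReal.toReal_mono hfin2 hmono
      _ = ℓ + ε / 2 := by
          rw [ENNReal.toReal_add hℓfin ENNReal.ofReal_ne_top,
            ENNReal.toReal_ofReal (by linarith)]
  have hlow : ∀ᶠ m in atTop,
      ℓ - ε / 2 ≤ (volume (chordSet x (Km m) (y : EuclideanSpace ℝ (Fin n)))).toReal := by
    rcases hy with hyint | hyout
    · obtain ⟨z, hz⟩ := hKi
      obtain ⟨t0, ht0⟩ := exists_interior_line hK hz hyint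
      have hJ : volume (chordSet x (interior K) (y : EuclideanSpace ℝ (Fin n))) = ℓE :=
        volume_chordSet_interior_eq hK ht0
      have hJne : volume (chordSet x (interior K) (y : EuclideanSpace ℝ (Fin n))) ≠ ⊤ := by
        rw [hJ]; exact hℓfin
      obtain ⟨S, hSJ, hScomp, hSlt⟩ :=
        (isOpen_chordSet isOpen_interior).measurableSet.exists_isCompact_lt_add hJne
          (ε := ENNReal.ofReal (ε/2))
          (by simp only [ne_eq, ENNReal.ofReal_eq_zero, not_le]; linarith)
      have hTcomp : IsCompact ((fun t : ℝ => (y : EuclideanSpace ℝ (Fin n)) + t • x) '' S) :=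
        hScomp.image (by continuity)
      have hTsub : ((fun t : ℝ => (y : EuclideanSpace ℝ (Fin n)) + t • x) '' S) ⊆ interior K := by
        rintro _ ⟨t, ht, rfl⟩; exact hSJ ht
      obtain ⟨r, hr, hthick⟩ := hTcomp.exists_cthickening_subset_open isOpen_interior hTsub
      have hr'0 : (0:ℝ) < min r 1 := lt_min hr zero_lt_one
      filter_upwards [hconv.eventually_lt_const hr'0] with m hm
      have hSchord : S ⊆ chordSet x (Km m) (y : EuclideanSpace ℝ (Fin n)) := by
        intro t ht
        have hball : closedBall ((y : EuclideanSpace ℝ (Fin n)) + t • x) r ⊆ K :=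
          ((closedBall_subset_cthickening (mem_image_of_mem _ ht) r).trans hthick).trans
            interior_subset
        have hKsub : K ⊆ cthickening (hausdorffDist (Km m) K) (Km m) := by
          apply subset_cthickening_of_hausdorffDist (hKmn m)
            (by rw [show EMetric.hausdorffEdist K (Km m) = EMetric.hausdorffEdist (Km m) K from Metric.hausdorffEDist_comm]; exact hEdist m)
          rw [hausdorffDist_comm]
        exact mem_of_closedBall_subset (hKm m) (hKmc m).isClosed (hKmn m) hr
          (lt_of_lt_of_le hm (min_le_left r 1)) hball hKsub
      have hfin2 : volume (chordSet x (Km m) (y : EuclideanSpace ℝ (Fin n))) ≠ ⊤ :=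
        hfin _ (subset_cthickening_of_hausdorffDist hKne (hEdist m)
          (hm.le.trans (min_le_right r 1)))
      have h1 : volume S ≤ volume (chordSet x (Km m) (y : EuclideanSpace ℝ (Fin n))) :=
        measure_mono hSchord
      have hSfin : volume S ≠ ⊤ := (h1.trans_lt (lt_top_iff_ne_top.2 hfin2)).ne
      have h2 : ℓE ≤ volume S + ENNReal.ofReal (ε / 2) := by rw [← hJ]; exact hSlt.le
      have h3 := ENNReal.toReal_mono
        (ENNReal.add_ne_top.2 ⟨hSfin, ENNReal.ofReal_ne_top⟩) h2
      rw [ENNReal.toReal_add hSfin ENNReal.ofReal_ne_top,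
        ENNReal.toReal_ofReal (by linarith)] at h3
      have h4 := ENNReal.toReal_mono hfin2 h1
      linarith
    · have hempty : chordSet x K (y : EuclideanSpace ℝ (Fin n)) = ∅ := by
        ext t
        simp only [mem_empty_iff_false, iff_false]
        intro ht
        exact hyout (mem_proj_image_iff.2 ⟨t, ht⟩)
      have hz : ℓ = 0 := by rw [hℓ, hℓE, hempty]; simp
      filter_upwards with m
      have hnn := ENNReal.toReal_nonneg
        (a := volume (chordSet x (Km m) (y : EuclideanSpace ℝ (Fin n))))
      linarith
  filter_upwards [hup, hlow] with m h1 h2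
  rw [Real.dist_eq, abs_lt]
  constructor <;> linarith

theorem xray_integral_hausdorff_convergence (n : ℕ)
    (Km : ℕ → Set (EuclideanSpace ℝ (Fin n))) (K : Set (EuclideanSpace ℝ (Fin n)))
    (hKm : ∀ m, Convex ℝ (Km m)) (hKmc : ∀ m, IsCompact (Km m))
    (hKmi : ∀ m, (interior (Km m)).Nonempty)
    (hK : Convex ℝ K) (hKc : IsCompact K) (hKi : (interior K).Nonempty)
    (hconv : Filter.Tendsto (fun m => Metric.hausdorffDist (Km m) K) Filter.atTop (nhds 0))
    (p : ℝ) (hp1 : -1 < p) (hp0 : p < 0) (x : EuclideanSpace ℝ (Fin n)) (hx : ‖x‖ = 1) :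
    Filter.Tendsto
      (fun m => ∫ y : ((ℝ ∙ x)ᗮ : Submodule ℝ (EuclideanSpace ℝ (Fin n))),
        ((volume {t : ℝ | (y : EuclideanSpace ℝ (Fin n)) + t • x ∈ Km m}).toReal) ^ (1 + p))
      Filter.atTop
      (nhds (∫ y : ((ℝ ∙ x)ᗮ : Submodule ℝ (EuclideanSpace ℝ (Fin n))),
        ((volume {t : ℝ | (y : EuclideanSpace ℝ (Fin n)) + t • x ∈ K}).toReal) ^ (1 + p))) := by
  classical
  have hKmn : ∀ m, (Km m).Nonempty := fun m => (hKmi m).mono interior_subset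
  have hKne : K.Nonempty := hKi.mono interior_subset
  have hEdist : ∀ m, EMetric.hausdorffEdist (Km m) K ≠ ⊤ := fun m =>
    Metric.hausdorffEdist_ne_top_of_nonempty_of_bounded (hKmn m) hKne
      (hKmc m).isBounded hKc.isBounded
  obtain ⟨R0, hR0K⟩ := hKc.isBounded.subset_closedBall 0
  set R := max R0 0 with hRdef
  have hRK : K ⊆ closedBall 0 R :=
    hR0K.trans (closedBall_subset_closedBall (le_max_left _ _))
  have hR0 : (0:ℝ) ≤ R := le_max_right _ _
  have hthick1 : cthickening 1 K ⊆ closedBall 0 (1 + R) := by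
    refine (cthickening_subset_of_subset 1 hRK).trans ?_
    rw [cthickening_closedBall zero_le_one hR0]
  have hexp : (0:ℝ) ≤ 1 + p := by linarith
  set bound : ((ℝ ∙ x)ᗮ : Submodule ℝ (EuclideanSpace ℝ (Fin n))) → ℝ :=
    (closedBall (0 : ((ℝ ∙ x)ᗮ : Submodule ℝ (EuclideanSpace ℝ (Fin n)))) (1 + R)).indicator
      (fun _ => (2 * (1 + R)) ^ (1 + p)) with hbound
  apply tendsto_integral_filter_of_dominated_convergence bound
  · -- measurability
    apply Filter.Eventually.of_forall
    intro m
    exact ((measurable_volume_chordSet x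
      (hKmc m).isClosed.measurableSet).ennreal_toReal.pow measurable_const).aestronglyMeasurable
  · -- bound
    have hsub1 : ∀ᶠ m in atTop, Km m ⊆ closedBall 0 (1 + R) := by
      filter_upwards [hconv.eventually_lt_const one_pos] with m hm
      exact (subset_cthickening_of_hausdorffDist hKne (hEdist m) hm.le).trans hthick1
    filter_upwards [hsub1] with m hsubm
    apply ae_of_all
    intro y
    have hinner : inner ℝ x (y : EuclideanSpace ℝ (Fin n)) = (0:ℝ) := inner_orth y
    have hnn : (0:ℝ) ≤ (volume (chordSet x (Km m) (y : EuclideanSpace ℝ (Fin n)))).toReal :=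
      ENNReal.toReal_nonneg
    show ‖(volume (chordSet x (Km m) (y : EuclideanSpace ℝ (Fin n)))).toReal ^ (1 + p)‖ ≤ bound y
    rw [Real.norm_of_nonneg (Real.rpow_nonneg hnn _)]
    by_cases hyR : ‖y‖ ≤ 1 + R
    · have hmem : y ∈ closedBall (0 : ((ℝ ∙ x)ᗮ : Submodule ℝ (EuclideanSpace ℝ (Fin n)))) (1+R) := by
        simpa [mem_closedBall, dist_zero_right] using hyR
      rw [hbound, indicator_of_mem hmem]
      exact Real.rpow_le_rpow hnn
        (volume_chordSet_toReal_le hx hinner hsubm (by linarith)) hexp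
    · have hmem : y ∉ closedBall (0 : ((ℝ ∙ x)ᗮ : Submodule ℝ (EuclideanSpace ℝ (Fin n)))) (1+R) := by
        simpa [mem_closedBall, dist_zero_right] using hyR
      rw [hbound, indicator_of_notMem hmem]
      have hcoe : ‖(y : EuclideanSpace ℝ (Fin n))‖ = ‖y‖ := rfl
      have hemp : chordSet x (Km m) (y : EuclideanSpace ℝ (Fin n)) = ∅ :=
        chordSet_eq_empty hx hinner hsubm (by rw [hcoe]; linarith [not_le.1 hyR])
      rw [hemp]
      simp [Real.zero_rpow (by linarith : (1:ℝ) + p ≠ 0)]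
  · -- integrable bound
    rw [hbound, integrable_indicator_iff measurableSet_closedBall]
    exact integrableOn_const (isCompact_closedBall _ _).measure_lt_top.ne
  · -- a.e. convergence
    set P := Submodule.orthogonalProjection (ℝ ∙ x)ᗮ '' K with hP
    have hPconv : Convex ℝ P := by
      have := hK.linear_image ((Submodule.orthogonalProjection (ℝ ∙ x)ᗮ).toLinearMap)
      simpa [hP] using this
    have hPclosed : IsClosed P := (hKc.image (Submodule.orthogonalProjection (ℝ ∙ x)ᗮ).continuous).isClosed
    have hfr : volume (frontier P) = 0 := Convex.addHaar_frontier (μ := volume) hPconv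
    have hae : ∀ᵐ y : ((ℝ ∙ x)ᗮ : Submodule ℝ (EuclideanSpace ℝ (Fin n))), y ∉ frontier P := by
      rw [ae_iff]
      convert hfr using 2
      ext z; simp
    filter_upwards [hae] with y hy
    have hy2 : y ∈ interior P ∨ y ∉ P := by
      by_cases hyP : y ∈ P
      · left
        by_contra hni
        exact hy ⟨subset_closure hyP, hni⟩
      · right; exact hyP
    have hpt := pointwise_tendsto hx hKm hKmc hKmn hK hKc hKi hconv hR0 hRK y hy2
    have hcont := ((Real.continuousAt_rpow_const _ (1+p) (Or.inr hexp)).tendsto).comp hpt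
    simpa [Function.comp_def, chordSet] using hcont
end

section
/- With notation as in the alternating-vectors setup (z_i alternating, w_i = z_i + z_{i+1}, n_i = (-1)^(i+1)⟨L w_i, z_i⟩^{-1} L w_i), for each i the vector L z_i is parallel to n_{i-1} - n_i; that is, if L z_i = a_i n_{i-1} + ã_i n_i (the pair {n_{i-1}, n_i} being linearly independent), then ã_i = -a_i. -/
theorem alternating_Lz_parallel_diff_normals (m : ℕ)
    (L : EuclideanSpace ℝ (Fin 2) →ₗ[ℝ] EuclideanSpace ℝ (Fin 2))
    (hL : ∀ x : EuclideanSpace ℝ (Fin 2), L x 0 = -x 1 ∧ L x 1 = x 0)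
    (z w n : ℕ → EuclideanSpace ℝ (Fin 2))
    (hz : ∀ i, 1 ≤ i → i ≤ m → z i ≠ 0)
    (halt : ∀ i, 1 ≤ i → i ≤ m - 1 → 0 < (-1 : ℝ) ^ (i + 1) * inner ℝ (L (z (i + 1))) (z i))
    (hw : ∀ i, 1 ≤ i → i ≤ m - 1 → w i = z i + z (i + 1))
    (hn : ∀ i, 1 ≤ i → i ≤ m - 1 →
      n i = ((-1 : ℝ) ^ (i + 1) * (inner ℝ (L (w i)) (z i) : ℝ)⁻¹) • L (w i))
    (i : ℕ) (hi1 : 2 ≤ i) (hi2 : i ≤ m - 1)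
    (hind : LinearIndependent ℝ ![n (i - 1), n i])
    (a a' : ℝ) (hdec : L (z i) = a • n (i - 1) + a' • n i) :
    a' = -a := by
  have hinner : ∀ x y : EuclideanSpace ℝ (Fin 2),
      (inner ℝ (L x) y : ℝ) = -(x 1) * y 0 + x 0 * y 1 := by
    intro x y
    have h := hL x
    simp [PiLp.inner_apply, Fin.sum_univ_two, RCLike.inner_apply, h.1, h.2]
    ring
  have hself : ∀ x : EuclideanSpace ℝ (Fin 2), (inner ℝ (L x) x : ℝ) = 0 := by
    intro x; rw [hinner]; ring
  have hanti : ∀ x y : EuclideanSpace ℝ (Fin 2),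
      (inner ℝ (L x) y : ℝ) = -(inner ℝ (L y) x : ℝ) := by
    intro x y; rw [hinner, hinner]; ring
  set k := i - 1 with hk
  have hki : i = k + 1 := by omega
  have hk1 : 1 ≤ k := by omega
  have hkm : k ≤ m - 1 := by omega
  have hi1' : 1 ≤ i := by omega
  -- values of the relevant inner products
  set c : ℝ := inner ℝ (L (z i)) (z k) with hc
  set d : ℝ := inner ℝ (L (z (i + 1))) (z i) with hd
  have hcpos : 0 < (-1 : ℝ) ^ i * c := by
    have := halt k hk1 hkm
    rw [← hki] at this
    simpa [hc] using this
  have hdpos : 0 < (-1 : ℝ) ^ (i + 1) * d := halt i hi1' hi2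
  have hcne : c ≠ 0 := by
    intro h; rw [h] at hcpos; simp at hcpos
  have hdne : d ≠ 0 := by
    intro h; rw [h] at hdpos; simp at hdpos
  -- inner ℝ (L (w k)) (z k) = c, inner ℝ (L (w k)) (z i) = -c
  have hwk : w k = z k + z i := by rw [hw k hk1 hkm, ← hki]
  have hLwk_zk : (inner ℝ (L (w k)) (z k) : ℝ) = c := by
    rw [hwk, map_add, inner_add_left, hself, zero_add]
  have hLwk_zi : (inner ℝ (L (w k)) (z i) : ℝ) = -c := by
    rw [hwk, map_add, inner_add_left, hself, hanti (z k) (z i)]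
    simp [hc]
  have hwi : w i = z i + z (i + 1) := hw i hi1' hi2
  have hLwi_zi : (inner ℝ (L (w i)) (z i) : ℝ) = d := by
    rw [hwi, map_add, inner_add_left, hself]
    simp [hd]
  -- inner of the normals with z i
  have hnk : (inner ℝ (n k) (z i) : ℝ) = (-1 : ℝ) ^ (i + 1) := by
    rw [hn k hk1 hkm, real_inner_smul_left, hLwk_zi, hLwk_zk, ← hki]
    field_simp
    ring
  have hni : (inner ℝ (n i) (z i) : ℝ) = (-1 : ℝ) ^ (i + 1) := by
    rw [hn i hi1' hi2, real_inner_smul_left, hLwi_zi, mul_assoc,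
      inv_mul_cancel₀ hdne, mul_one]
  -- pair hdec with z i
  have key : (0 : ℝ) = a * (-1 : ℝ) ^ (i + 1) + a' * (-1 : ℝ) ^ (i + 1) := by
    have h0 : (inner ℝ (L (z i)) (z i) : ℝ)
        = a * inner ℝ (n k) (z i) + a' * inner ℝ (n i) (z i) := by
      rw [hdec, inner_add_left, real_inner_smul_left, real_inner_smul_left]
    rw [hself, hnk, hni] at h0
    exact h0
  have hs : ((-1 : ℝ) ^ (i + 1)) ≠ 0 := by positivity
  have : (a + a') * (-1 : ℝ) ^ (i + 1) = 0 := by linarith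
  have := mul_eq_zero.mp this
  rcases this with h | h
  · linarith
  · exact absurd h hs
end

section
/- Let p ∈ (-1, 0), v₀, v₁, …, v_k ∈ ℝ² nonzero, and let D be a closed convex cone (minus the origin) on which all functions x ↦ ⟨v_j, x⟩ (j = 0,…,k) are strictly positive and on which f(x) = ⟨v₀, x⟩^(-p) - ∑_{j=1}^k ⟨v_j, x⟩^(-p) is strictly positive. Then the function x ↦ f(x)^(-1/p) is convex on D. -/
open Real Finset

lemma aux_weighted {q : ℝ} (hq0 : 0 < q) (hq1 : q < 1) {l m s t : ℝ}
    (hl : 0 ≤ l) (hm : 0 ≤ m) (hlm : l + m = 1) (hs : 0 ≤ s) (ht : 0 ≤ t) :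
    l ^ (1 - q) * s ^ q + m ^ (1 - q) * t ^ q ≤ (s + t) ^ q := by
  have h1q : (0:ℝ) < 1 - q := by linarith
  rcases hl.eq_or_lt with hl0 | hl'
  · rw [← hl0, Real.zero_rpow h1q.ne', zero_mul, zero_add]
    have hm1 : m = 1 := by linarith
    rw [hm1, Real.one_rpow, one_mul]
    exact Real.rpow_le_rpow ht (by linarith) hq0.le
  rcases hm.eq_or_lt with hm0 | hm'
  · rw [← hm0, Real.zero_rpow h1q.ne', zero_mul, add_zero]
    have hl1 : l = 1 := by linarith
    rw [hl1, Real.one_rpow, one_mul]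
    exact Real.rpow_le_rpow hs (by linarith) hq0.le
  have key := (Real.concaveOn_rpow hq0.le hq1.le).2
      (Set.mem_Ici.mpr (div_nonneg hs hl'.le)) (Set.mem_Ici.mpr (div_nonneg ht hm'.le))
      hl'.le hm'.le hlm
  have e1 : l • (s / l) + m • (t / m) = s + t := by
    simp only [smul_eq_mul]
    field_simp
  rw [e1] at key
  simp only [smul_eq_mul] at key
  refine le_trans (le_of_eq ?_) key
  simp only [Real.div_rpow hs hl'.le, Real.div_rpow ht hm'.le,
    Real.rpow_sub hl', Real.rpow_sub hm', Real.rpow_one]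
  field_simp

lemma aux_rpow_inv_rpow {q x : ℝ} (hq : 0 < q) (hx : 0 ≤ x) : (x ^ (1/q)) ^ q = x := by
  rw [← Real.rpow_mul hx, one_div, inv_mul_cancel₀ hq.ne', Real.rpow_one]

lemma aux_minkowski {q : ℝ} (hq0 : 0 < q) (hq1 : q < 1) {n : ℕ} (u w : Fin n → ℝ)
    (hu : ∀ i, 0 ≤ u i) (hw : ∀ i, 0 ≤ w i) :
    (∑ i, u i ^ q) ^ (1/q) + (∑ i, w i ^ q) ^ (1/q) ≤ (∑ i, (u i + w i) ^ q) ^ (1/q) := by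
  have hSu : (0:ℝ) ≤ ∑ i, u i ^ q := Finset.sum_nonneg fun i _ => Real.rpow_nonneg (hu i) q
  have hSw : (0:ℝ) ≤ ∑ i, w i ^ q := Finset.sum_nonneg fun i _ => Real.rpow_nonneg (hw i) q
  have hT : (0:ℝ) ≤ ∑ i, (u i + w i) ^ q :=
    Finset.sum_nonneg fun i _ => Real.rpow_nonneg (add_nonneg (hu i) (hw i)) q
  set U : ℝ := (∑ i, u i ^ q) ^ (1/q) with hU
  set W : ℝ := (∑ i, w i ^ q) ^ (1/q) with hW
  have hU0 : 0 ≤ U := Real.rpow_nonneg hSu _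
  have hW0 : 0 ≤ W := Real.rpow_nonneg hSw _
  rcases eq_or_lt_of_le (add_nonneg hU0 hW0) with hUW | hUW
  · rw [← hUW]; exact Real.rpow_nonneg hT _
  set l : ℝ := U / (U + W) with hl
  set m : ℝ := W / (U + W) with hm
  have hl0 : 0 ≤ l := div_nonneg hU0 hUW.le
  have hm0 : 0 ≤ m := div_nonneg hW0 hUW.le
  have hlm : l + m = 1 := by rw [hl, hm, ← add_div, div_self hUW.ne']
  -- pointwise bound summed
  have hsum : l ^ (1-q) * (∑ i, u i ^ q) + m ^ (1-q) * (∑ i, w i ^ q)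
      ≤ ∑ i, (u i + w i) ^ q := by
    rw [Finset.mul_sum, Finset.mul_sum, ← Finset.sum_add_distrib]
    exact Finset.sum_le_sum fun i _ =>
      aux_weighted hq0 hq1 hl0 hm0 hlm (hu i) (hw i)
  have hUq : U ^ q = ∑ i, u i ^ q := aux_rpow_inv_rpow hq0 hSu
  have hWq : W ^ q = ∑ i, w i ^ q := aux_rpow_inv_rpow hq0 hSw
  rw [← hUq, ← hWq] at hsum
  have hkey : (U + W) ^ q ≤ ∑ i, (u i + w i) ^ q := by
    refine le_trans (le_of_eq ?_) hsum
    rw [hl, hm, Real.div_rpow hU0 hUW.le, Real.div_rpow hW0 hUW.le,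
      div_mul_eq_mul_div, div_mul_eq_mul_div,
      ← Real.rpow_add' hU0 (by norm_num), ← Real.rpow_add' hW0 (by norm_num),
      show 1 - q + q = 1 by ring, Real.rpow_one, ← add_div,
      Real.rpow_sub hUW, Real.rpow_one]
    field_simp
    simp
  calc U + W = ((U + W) ^ q) ^ (1/q) := by
        rw [← Real.rpow_mul hUW.le, mul_one_div, div_self hq0.ne', Real.rpow_one]
    _ ≤ (∑ i, (u i + w i) ^ q) ^ (1/q) :=
        Real.rpow_le_rpow (Real.rpow_nonneg hUW.le q) hkey (by positivity)

lemma aux_rpow_inv_rpow' {q x : ℝ} (hq : 0 < q) (hx : 0 ≤ x) : (x ^ q) ^ (1/q) = x := by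
  rw [← Real.rpow_mul hx, mul_one_div, div_self hq.ne', Real.rpow_one]

lemma aux_subadd {q : ℝ} (hq0 : 0 < q) (hq1 : q < 1) {k : ℕ}
    (A₁ A₂ : ℝ) (B₁ B₂ : Fin k → ℝ) (hA₁ : 0 ≤ A₁) (hA₂ : 0 ≤ A₂)
    (hB₁ : ∀ j, 0 ≤ B₁ j) (hB₂ : ∀ j, 0 ≤ B₂ j)
    (hg₁ : 0 < A₁ ^ q - ∑ j, B₁ j ^ q) (hg₂ : 0 < A₂ ^ q - ∑ j, B₂ j ^ q)
    (hg : 0 < (A₁ + A₂) ^ q - ∑ j, (B₁ j + B₂ j) ^ q) :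
    ((A₁ + A₂) ^ q - ∑ j, (B₁ j + B₂ j) ^ q) ^ (1/q)
      ≤ (A₁ ^ q - ∑ j, B₁ j ^ q) ^ (1/q) + (A₂ ^ q - ∑ j, B₂ j ^ q) ^ (1/q) := by
  set g₁ : ℝ := (A₁ ^ q - ∑ j, B₁ j ^ q) ^ (1/q) with hg₁d
  set g₂ : ℝ := (A₂ ^ q - ∑ j, B₂ j ^ q) ^ (1/q) with hg₂d
  have hg₁0 : 0 ≤ g₁ := Real.rpow_nonneg hg₁.le _
  have hg₂0 : 0 ≤ g₂ := Real.rpow_nonneg hg₂.le _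
  set u : Fin (k+1) → ℝ := Fin.cons g₁ B₁ with hu
  set w : Fin (k+1) → ℝ := Fin.cons g₂ B₂ with hw
  have hun : ∀ i, 0 ≤ u i := Fin.cases hg₁0 hB₁
  have hwn : ∀ i, 0 ≤ w i := Fin.cases hg₂0 hB₂
  have hsu : ∑ i, u i ^ q = A₁ ^ q := by
    rw [Fin.sum_univ_succ]
    simp only [hu, Fin.cons_zero, Fin.cons_succ]
    rw [hg₁d, aux_rpow_inv_rpow hq0 hg₁.le]
    ring
  have hsw : ∑ i, w i ^ q = A₂ ^ q := by
    rw [Fin.sum_univ_succ]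
    simp only [hw, Fin.cons_zero, Fin.cons_succ]
    rw [hg₂d, aux_rpow_inv_rpow hq0 hg₂.le]
    ring
  have hmink := aux_minkowski hq0 hq1 u w hun hwn
  rw [hsu, hsw, aux_rpow_inv_rpow' hq0 hA₁, aux_rpow_inv_rpow' hq0 hA₂] at hmink
  have hsuw : ∑ i, (u i + w i) ^ q = (g₁ + g₂) ^ q + ∑ j, (B₁ j + B₂ j) ^ q := by
    rw [Fin.sum_univ_succ]
    simp only [hu, hw, Fin.cons_zero, Fin.cons_succ]
  rw [hsuw] at hmink
  -- raise to power q
  have h2 : (A₁ + A₂) ^ q ≤ (g₁ + g₂) ^ q + ∑ j, (B₁ j + B₂ j) ^ q := by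
    have := Real.rpow_le_rpow (add_nonneg hA₁ hA₂) hmink hq0.le
    rwa [aux_rpow_inv_rpow hq0 (add_nonneg (Real.rpow_nonneg (add_nonneg hg₁0 hg₂0) q) (Finset.sum_nonneg fun j _ => Real.rpow_nonneg (add_nonneg (hB₁ j) (hB₂ j)) q))] at this
  have h3 : (A₁ + A₂) ^ q - ∑ j, (B₁ j + B₂ j) ^ q ≤ (g₁ + g₂) ^ q := by linarith
  have h4 := Real.rpow_le_rpow hg.le h3 (by positivity : (0:ℝ) ≤ 1/q)
  rwa [aux_rpow_inv_rpow' hq0 (add_nonneg hg₁0 hg₂0)] at h4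

lemma aux_scale_sub {q : ℝ} (hq0 : 0 < q) {k : ℕ} {a A : ℝ} {B : Fin k → ℝ}
    (ha : 0 ≤ a) (hA : 0 ≤ A) (hB : ∀ j, 0 ≤ B j) :
    (a * A) ^ q - ∑ j, (a * B j) ^ q = a ^ q * (A ^ q - ∑ j, B j ^ q) := by
  rw [Real.mul_rpow ha hA]
  have h : ∑ j, (a * B j) ^ q = a ^ q * ∑ j, B j ^ q := by
    rw [Finset.mul_sum]
    exact Finset.sum_congr rfl fun j _ => Real.mul_rpow ha (hB j)
  rw [h, mul_sub]

lemma aux_scale {q : ℝ} (hq0 : 0 < q) {k : ℕ} (a A : ℝ) (B : Fin k → ℝ)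
    (ha : 0 ≤ a) (hA : 0 ≤ A) (hB : ∀ j, 0 ≤ B j) (hf : 0 ≤ A ^ q - ∑ j, B j ^ q) :
    ((a * A) ^ q - ∑ j, (a * B j) ^ q) ^ (1/q) = a * (A ^ q - ∑ j, B j ^ q) ^ (1/q) := by
  rw [Real.mul_rpow ha hA]
  have h : ∑ j, (a * B j) ^ q = a ^ q * ∑ j, B j ^ q := by
    rw [Finset.mul_sum]
    exact Finset.sum_congr rfl fun j _ => Real.mul_rpow ha (hB j)
  rw [h, ← mul_sub, Real.mul_rpow (Real.rpow_nonneg ha q) hf, aux_rpow_inv_rpow' hq0 ha]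

theorem convexOn_rpow_of_linear_combination (p : ℝ) (hp1 : -1 < p) (hp0 : p < 0)
    (k : ℕ) (v₀ : EuclideanSpace ℝ (Fin 2)) (v : Fin k → EuclideanSpace ℝ (Fin 2))
    (hv₀ : v₀ ≠ 0) (hv : ∀ j, v j ≠ 0)
    (D : Set (EuclideanSpace ℝ (Fin 2)))
    (hDconv : Convex ℝ D) (hD0 : (0 : EuclideanSpace ℝ (Fin 2)) ∉ D)
    (hDcone : ∀ x ∈ D, ∀ t : ℝ, 0 < t → t • x ∈ D)
    (hDclosed : IsClosed (insert (0 : EuclideanSpace ℝ (Fin 2)) D))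
    (hpos₀ : ∀ x ∈ D, 0 < (inner ℝ v₀ x : ℝ))
    (hpos : ∀ j, ∀ x ∈ D, 0 < (inner ℝ (v j) x : ℝ))
    (hfpos : ∀ x ∈ D, 0 < (inner ℝ v₀ x : ℝ) ^ (-p) - ∑ j, (inner ℝ (v j) x : ℝ) ^ (-p)) :
    ConvexOn ℝ D
      (fun x => ((inner ℝ v₀ x : ℝ) ^ (-p) - ∑ j, (inner ℝ (v j) x : ℝ) ^ (-p)) ^ (-1 / p)) := by
  have hq0 : (0:ℝ) < -p := neg_pos.mpr hp0
  have hq1 : -p < 1 := by linarith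
  have hdiv : -1 / p = 1 / (-p) := by rw [div_neg, neg_div]
  refine ⟨hDconv, fun x hx y hy a b ha hb hab => ?_⟩
  rcases ha.eq_or_lt with rfl | ha'
  · have hb1 : b = 1 := by linarith
    subst hb1
    simp
  rcases hb.eq_or_lt with rfl | hb'
  · have ha1 : a = 1 := by linarith
    subst ha1
    simp
  have hz : a • x + b • y ∈ D := hDconv hx hy ha hb hab
  have hlin : ∀ vv : EuclideanSpace ℝ (Fin 2),
      (inner ℝ vv (a • x + b • y) : ℝ) = a * inner ℝ vv x + b * inner ℝ vv y := by
    intro vv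
    rw [inner_add_right, real_inner_smul_right, real_inner_smul_right]
  have hgz := hfpos _ hz
  simp only [hlin] at hgz
  have hfx := hfpos x hx
  have hfy := hfpos y hy
  have key := aux_subadd hq0 hq1 (a * inner ℝ v₀ x) (b * inner ℝ v₀ y)
      (fun j => a * inner ℝ (v j) x) (fun j => b * inner ℝ (v j) y)
      (mul_nonneg ha (hpos₀ x hx).le) (mul_nonneg hb (hpos₀ y hy).le)
      (fun j => mul_nonneg ha (hpos j x hx).le) (fun j => mul_nonneg hb (hpos j y hy).le)
      ?hg1 ?hg2 ?hgc
  case hg1 =>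
    rw [aux_scale_sub hq0 ha (hpos₀ x hx).le (fun j => (hpos j x hx).le)]
    exact mul_pos (Real.rpow_pos_of_pos ha' _) hfx
  case hg2 =>
    rw [aux_scale_sub hq0 hb (hpos₀ y hy).le (fun j => (hpos j y hy).le)]
    exact mul_pos (Real.rpow_pos_of_pos hb' _) hfy
  case hgc => exact hgz
  rw [aux_scale hq0 a _ _ ha (hpos₀ x hx).le (fun j => (hpos j x hx).le) hfx.le,
    aux_scale hq0 b _ _ hb (hpos₀ y hy).le (fun j => (hpos j y hy).le) hfy.le] at key
  simp only [hdiv, hlin, smul_eq_mul]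
  exact key
end

section
/- Let K ⊆ ℝⁿ be a convex body, p ∈ (-1,0), and for v ≠ 0 define ‖v‖_{R_p K} = ((1/vol(K)) ∫_K ρ_K(x, v)^p dx)^(-1/p). Then ‖·‖_{R_p K} is positively homogeneous of degree 1: ‖λ v‖ = |λ| ‖v‖ for all λ ∈ ℝ, v ∈ ℝⁿ \ {0}. -/
open MeasureTheory
open scoped Classical

/-- The radial function of `K` with respect to `x` in the direction `v`. -/
noncomputable def radialFn (n : ℕ) (K : Set (EuclideanSpace ℝ (Fin n)))
    (x v : EuclideanSpace ℝ (Fin n)) : ℝ :=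
  sSup {t : ℝ | 0 < t ∧ x + t • v ∈ K}

/-- The gauge `‖·‖_{R_p K}` of the radial mean body of parameter `p`. -/
noncomputable def radialMeanGauge (n : ℕ) (K : Set (EuclideanSpace ℝ (Fin n))) (p : ℝ)
    (v : EuclideanSpace ℝ (Fin n)) : ℝ :=
  if v = 0 then 0
  else ((volume K).toReal⁻¹ * ∫ x in K, radialFn n K x v ^ p) ^ (-1 / p)

section Aux

variable {n : ℕ} {K : Set (EuclideanSpace ℝ (Fin n))}

lemma radialFn_nonneg (n : ℕ) (K : Set (EuclideanSpace ℝ (Fin n)))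
    (x v : EuclideanSpace ℝ (Fin n)) : 0 ≤ radialFn n K x v :=
  Real.sSup_nonneg fun _ ht => ht.1.le

/-- Scaling of the radial function in the direction argument. -/
lemma radialFn_smul (x w : EuclideanSpace ℝ (Fin n)) {μ : ℝ} (hμ : 0 < μ) :
    radialFn n K x (μ • w) = μ⁻¹ * radialFn n K x w := by
  set S : Set ℝ := {t : ℝ | 0 < t ∧ x + t • w ∈ K} with hS
  have hset : {t : ℝ | 0 < t ∧ x + t • (μ • w) ∈ K} = (fun s => μ⁻¹ * s) '' S := by
    ext t
    constructor
    · rintro ⟨ht, hmem⟩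
      rw [smul_smul, mul_comm] at hmem
      exact ⟨μ * t, ⟨by positivity, hmem⟩, by field_simp⟩
    · rintro ⟨s, ⟨hs, hmem⟩, rfl⟩
      refine ⟨by positivity, ?_⟩
      rw [smul_smul]
      have : μ⁻¹ * s * μ = s := by field_simp
      rw [this]
      exact hmem
    -- done set
  unfold radialFn
  rw [hset, ← hS]
  rcases S.eq_empty_or_nonempty with h | h
  · simp [h, Real.sSup_empty]
  by_cases hb : BddAbove S
  · exact (Monotone.map_csSup_of_continuousAt
      (Continuous.continuousAt (continuous_const.mul continuous_id))
      (fun a b hab => mul_le_mul_of_nonneg_left hab (by positivity)) h hb).symm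
  · have hb' : ¬ BddAbove ((fun s => μ⁻¹ * s) '' S) := by
      rintro ⟨M, hM⟩
      refine hb ⟨μ * M, fun s hs => ?_⟩
      have h1 : μ⁻¹ * s ≤ M := hM ⟨s, hs, rfl⟩
      have h2 : μ * (μ⁻¹ * s) ≤ μ * M := mul_le_mul_of_nonneg_left h1 hμ.le
      rwa [← mul_assoc, mul_inv_cancel₀ hμ.ne', one_mul] at h2
    rw [csSup_of_not_bddAbove hb', csSup_of_not_bddAbove hb, Real.sSup_empty, mul_zero]

variable (hKconv : Convex ℝ K) (hKcomp : IsCompact K)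

include hKcomp in
lemma radialFn_bddAbove (x : EuclideanSpace ℝ (Fin n)) {v : EuclideanSpace ℝ (Fin n)}
    (hv : v ≠ 0) : BddAbove {t : ℝ | 0 < t ∧ x + t • v ∈ K} := by
  obtain ⟨C, hC⟩ := isBounded_iff_forall_norm_le.1 hKcomp.isBounded
  refine ⟨(C + ‖x‖) / ‖v‖, fun t ht => ?_⟩
  have hvn : 0 < ‖v‖ := norm_pos_iff.mpr hv
  have h1 : ‖x + t • v‖ ≤ C := hC _ ht.2
  have h2 : ‖t • v‖ ≤ C + ‖x‖ := by
    have h3 : ‖(x + t • v) - x‖ ≤ ‖x + t • v‖ + ‖x‖ := norm_sub_le _ _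
    rw [add_sub_cancel_left] at h3
    linarith
  rw [norm_smul, Real.norm_eq_abs, abs_of_pos ht.1] at h2
  rw [le_div_iff₀ hvn]
  exact h2

include hKcomp in
lemma radialFn_mem (x : EuclideanSpace ℝ (Fin n)) {v : EuclideanSpace ℝ (Fin n)} (hv : v ≠ 0)
    (hne : {t : ℝ | 0 < t ∧ x + t • v ∈ K}.Nonempty) :
    x + radialFn n K x v • v ∈ K := by
  have h1 : radialFn n K x v ∈ closure {t : ℝ | 0 < t ∧ x + t • v ∈ K} :=
    csSup_mem_closure hne (radialFn_bddAbove hKcomp x hv)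
  have h2 : closure {t : ℝ | 0 < t ∧ x + t • v ∈ K} ⊆ (fun t : ℝ => x + t • v) ⁻¹' K :=
    closure_minimal (fun t ht => ht.2)
      (IsClosed.preimage (by continuity) hKcomp.isClosed)
  exact h2 h1

include hKconv hKcomp in
lemma le_radialFn_iff {x : EuclideanSpace ℝ (Fin n)} (hx : x ∈ K)
    {v : EuclideanSpace ℝ (Fin n)} (hv : v ≠ 0) {c : ℝ} (hc : 0 < c) :
    c ≤ radialFn n K x v ↔ x + c • v ∈ K := by
  constructor
  · intro h
    have hne : {t : ℝ | 0 < t ∧ x + t • v ∈ K}.Nonempty := by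
      by_contra h'
      rw [Set.not_nonempty_iff_eq_empty] at h'
      rw [radialFn, h', Real.sSup_empty] at h
      linarith
    set ρ := radialFn n K x v with hρdef
    have hρ : 0 < ρ := lt_of_lt_of_le hc h
    have hmem : x + ρ • v ∈ K := radialFn_mem hKcomp x hv hne
    have key : ((1 : ℝ) - c / ρ) • x + (c / ρ) • (x + ρ • v) = x + c • v := by
      rw [smul_add, smul_smul, div_mul_cancel₀ _ hρ.ne', sub_smul, one_smul]
      abel
    rw [← key]
    exact hKconv hx hmem (by rw [sub_nonneg, div_le_one hρ]; exact h) (by positivity)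
      (by rw [sub_add_cancel])
  · intro h
    exact le_csSup (radialFn_bddAbove hKcomp x hv) ⟨hc, h⟩

include hKcomp in
lemma radialFn_pos_of_interior {x : EuclideanSpace ℝ (Fin n)} (hx : x ∈ interior K)
    {v : EuclideanSpace ℝ (Fin n)} (hv : v ≠ 0) : 0 < radialFn n K x v := by
  obtain ⟨ε, hε, hball⟩ := Metric.isOpen_iff.1 isOpen_interior x hx
  have hvn : 0 < ‖v‖ := norm_pos_iff.mpr hv
  set t := ε / (2 * ‖v‖) with ht
  have htpos : 0 < t := by positivity
  have hmem : x + t • v ∈ K := by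
    apply interior_subset
    apply hball
    rw [Metric.mem_ball, dist_eq_norm, add_sub_cancel_left, norm_smul, Real.norm_eq_abs,
      abs_of_pos htpos, ht]
    rw [div_mul_eq_mul_div, div_lt_iff₀ (by positivity)]
    nlinarith
  calc (0 : ℝ) < t := htpos
    _ ≤ radialFn n K x v := le_csSup (radialFn_bddAbove hKcomp x hv) ⟨htpos, hmem⟩

include hKconv hKcomp in
lemma radialFn_indicator_measurable {v : EuclideanSpace ℝ (Fin n)} (hv : v ≠ 0) :
    Measurable (K.indicator fun x => radialFn n K x v) := by
  have hK : MeasurableSet K := hKcomp.isClosed.measurableSet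
  apply measurable_of_Ici
  intro c
  rcases le_or_gt c 0 with hc | hc
  · have : (K.indicator fun x => radialFn n K x v) ⁻¹' Set.Ici c = Set.univ := by
      ext x
      simp only [Set.mem_preimage, Set.mem_Ici, Set.mem_univ, iff_true]
      refine le_trans hc ?_
      by_cases hx : x ∈ K
      · simp [Set.indicator_of_mem hx, radialFn_nonneg]
      · simp [Set.indicator_of_notMem hx]
    rw [this]; exact MeasurableSet.univ
  · have : (K.indicator fun x => radialFn n K x v) ⁻¹' Set.Ici c
        = K ∩ (fun x => x + c • v) ⁻¹' K := by
      ext x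
      simp only [Set.mem_preimage, Set.mem_Ici, Set.mem_inter_iff]
      by_cases hx : x ∈ K
      · rw [Set.indicator_of_mem hx]
        simp only [hx, true_and]
        exact le_radialFn_iff hKconv hKcomp hx hv hc
      · rw [Set.indicator_of_notMem hx]
        simp [hx, not_le.mpr hc]
    rw [this]
    exact hK.inter ((Continuous.measurable (by continuity)) hK)

include hKconv hKcomp in
/-- Layer-cake representation of the integral. -/
lemma radialFn_integral_repr (hKint : (interior K).Nonempty) {p : ℝ} (hp0 : p < 0)
    {w : EuclideanSpace ℝ (Fin n)} (hw : w ≠ 0) :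
    ∫ x in K, radialFn n K x w ^ p
      = (∫⁻ t in Set.Ioi (0 : ℝ),
          (volume K - volume (K ∩ (fun x => x + (t ^ p⁻¹) • w) ⁻¹' K))).toReal := by
  have hK : MeasurableSet K := hKcomp.isClosed.measurableSet
  set f : EuclideanSpace ℝ (Fin n) → ℝ := fun x => radialFn n K x w with hf
  have hf0 : ∀ x, 0 ≤ f x := fun x => radialFn_nonneg n K x w
  have hg : Measurable (K.indicator f) := radialFn_indicator_measurable hKconv hKcomp hw
  have hgp : Measurable fun x => (K.indicator f) x ^ p := hg.pow measurable_const
  have hfeq : (fun x => (K.indicator f) x ^ p) =ᵐ[volume.restrict K] fun x => f x ^ p := by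
    filter_upwards [indicator_ae_eq_restrict (f := f) (μ := volume) hK] with x hx
    rw [hx]
  have hfae : AEMeasurable (fun x => f x ^ p) (volume.restrict K) :=
    hgp.aemeasurable.congr hfeq
  have hnn : (0 : EuclideanSpace ℝ (Fin n) → ℝ) ≤ᵐ[volume.restrict K] fun x => f x ^ p :=
    Filter.Eventually.of_forall fun x => Real.rpow_nonneg (hf0 x) p
  rw [integral_eq_lintegral_of_nonneg_ae hnn hfae.aestronglyMeasurable]
  congr 1
  rw [lintegral_eq_lintegral_meas_lt _ hnn hfae]
  apply setLIntegral_congr_fun measurableSet_Ioi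
  intro t ht
  beta_reduce
  have ht : (0 : ℝ) < t := ht
  set c : ℝ := t ^ p⁻¹ with hc
  have hcpos : 0 < c := Real.rpow_pos_of_pos ht _
  set Q : Set (EuclideanSpace ℝ (Fin n)) := (fun x => x + c • w) ⁻¹' K with hQ
  have hQm : MeasurableSet Q := (Continuous.measurable (by continuity)) hK
  -- characterize the superlevel set
  have hiff : ∀ x ∈ K, (t < f x ^ p ↔ (0 < f x ∧ x + c • w ∉ K)) := by
    intro x hx
    rcases eq_or_lt_of_le (hf0 x) with h0 | h0
    · rw [← h0, Real.zero_rpow hp0.ne]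
      simp [not_lt.mpr ht.le, lt_irrefl]
    · have h1 : t < f x ^ p ↔ f x < c := (Real.lt_rpow_inv_iff_of_neg h0 ht hp0).symm
      have h2 : f x < c ↔ x + c • w ∉ K := by
        rw [← le_radialFn_iff hKconv hKcomp hx hw hcpos (v := w), not_le]
      rw [h1, h2]
      simp [h0]
  rw [Measure.restrict_apply' hK]
  have hfr : volume (frontier K) = 0 := hKconv.addHaar_frontier volume
  have hsub1 : {x | t < f x ^ p} ∩ K ⊆ K \ (K ∩ Q) := by
    rintro x ⟨hxt, hxK⟩
    obtain ⟨-, hnot⟩ := (hiff x hxK).1 hxt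
    exact ⟨hxK, fun h => hnot h.2⟩
  have hsub2 : K \ (K ∩ Q) ⊆ ({x | t < f x ^ p} ∩ K) ∪ frontier K := by
    rintro x ⟨hxK, hxn⟩
    have hnot : x + c • w ∉ K := fun h => hxn ⟨hxK, h⟩
    rcases eq_or_lt_of_le (hf0 x) with h0 | h0
    · right
      rw [hKcomp.isClosed.frontier_eq]
      refine ⟨hxK, fun hint => ?_⟩
      exact absurd h0 (ne_of_lt (radialFn_pos_of_interior hKcomp hint hw))
    · left
      exact ⟨(hiff x hxK).2 ⟨h0, hnot⟩, hxK⟩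
  have hmeq : volume ({x | t < f x ^ p} ∩ K) = volume (K \ (K ∩ Q)) := by
    refine le_antisymm (measure_mono hsub1) ?_
    calc volume (K \ (K ∩ Q)) ≤ volume (({x | t < f x ^ p} ∩ K) ∪ frontier K) :=
          measure_mono hsub2
      _ ≤ volume ({x | t < f x ^ p} ∩ K) + volume (frontier K) := measure_union_le _ _
      _ = volume ({x | t < f x ^ p} ∩ K) := by rw [hfr, add_zero]
  rw [hmeq, measure_diff Set.inter_subset_left (hK.inter hQm).nullMeasurableSet
    (ne_of_lt (lt_of_le_of_lt (measure_mono Set.inter_subset_left) hKcomp.measure_lt_top))]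

lemma vol_inter_translate_neg (c : ℝ) (w : EuclideanSpace ℝ (Fin n)) :
    volume (K ∩ (fun x => x + c • (-w)) ⁻¹' K)
      = volume (K ∩ (fun x => x + c • w) ⁻¹' K) := by
  have hset : K ∩ (fun x => x + c • (-w)) ⁻¹' K
      = (fun x => -(c • w) + x) ⁻¹' (K ∩ (fun x => x + c • w) ⁻¹' K) := by
    ext x
    simp only [Set.mem_inter_iff, Set.mem_preimage, smul_neg, ← sub_eq_add_neg,
      neg_add_eq_sub, sub_add_cancel]
    exact and_comm
  rw [hset, measure_preimage_add]

include hKconv hKcomp in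
lemma radialFn_integral_symm (hKint : (interior K).Nonempty) {p : ℝ} (hp0 : p < 0)
    {v : EuclideanSpace ℝ (Fin n)} (hv : v ≠ 0) :
    ∫ x in K, radialFn n K x (-v) ^ p = ∫ x in K, radialFn n K x v ^ p := by
  rw [radialFn_integral_repr hKconv hKcomp hKint hp0 (neg_ne_zero.mpr hv),
    radialFn_integral_repr hKconv hKcomp hKint hp0 hv]
  congr 1
  apply setLIntegral_congr_fun measurableSet_Ioi
  intro t _
  beta_reduce
  rw [vol_inter_translate_neg]

include hKconv hKcomp in
lemma radialMeanGauge_smul_pos {p : ℝ} (hp0 : p < 0) {μ : ℝ} (hμ : 0 < μ)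
    {w : EuclideanSpace ℝ (Fin n)} (hw : w ≠ 0) :
    radialMeanGauge n K p (μ • w) = μ * radialMeanGauge n K p w := by
  rw [radialMeanGauge, radialMeanGauge, if_neg (smul_ne_zero hμ.ne' hw), if_neg hw]
  have h1 : ∀ x : EuclideanSpace ℝ (Fin n),
      radialFn n K x (μ • w) ^ p = μ⁻¹ ^ p * radialFn n K x w ^ p := fun x => by
    rw [radialFn_smul x w hμ, Real.mul_rpow (by positivity) (radialFn_nonneg n K x w)]
  simp only [h1]
  rw [integral_const_mul]
  have hA : 0 ≤ (volume K).toReal⁻¹ * ∫ x in K, radialFn n K x w ^ p :=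
    mul_nonneg (by positivity)
      (integral_nonneg fun x => Real.rpow_nonneg (radialFn_nonneg n K x w) p)
  have hre : (volume K).toReal⁻¹ * (μ⁻¹ ^ p * ∫ x in K, radialFn n K x w ^ p)
      = μ⁻¹ ^ p * ((volume K).toReal⁻¹ * ∫ x in K, radialFn n K x w ^ p) := by ring
  rw [hre, Real.mul_rpow (Real.rpow_nonneg (by positivity) p) hA]
  congr 1
  rw [← Real.rpow_mul (by positivity : (0:ℝ) ≤ μ⁻¹),
    show p * (-1 / p) = -1 by rw [mul_div_assoc', mul_neg_one, neg_div, div_self hp0.ne], Real.rpow_neg_one, inv_inv]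

end Aux

theorem radialMeanGauge_homogeneous (n : ℕ) (K : Set (EuclideanSpace ℝ (Fin n)))
    (hKconv : Convex ℝ K) (hKcomp : IsCompact K) (hKint : (interior K).Nonempty)
    (p : ℝ) (hp1 : -1 < p) (hp0 : p < 0)
    (lam : ℝ) (v : EuclideanSpace ℝ (Fin n)) (hv : v ≠ 0) :
    radialMeanGauge n K p (lam • v) = |lam| * radialMeanGauge n K p v := by
  rcases lt_trichotomy lam 0 with hneg | rfl | hpos
  · have hvn : -v ≠ 0 := neg_ne_zero.mpr hv
    have h1 : lam • v = (-lam) • (-v) := by rw [neg_smul_neg]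
    rw [h1, radialMeanGauge_smul_pos hKconv hKcomp hp0 (neg_pos.mpr hneg) hvn,
      abs_of_neg hneg]
    congr 1
    rw [radialMeanGauge, radialMeanGauge, if_neg hvn, if_neg hv,
      radialFn_integral_symm hKconv hKcomp hKint hp0 hv]
  · simp [radialMeanGauge]
  · rw [radialMeanGauge_smul_pos hKconv hKcomp hp0 hpos hv, abs_of_pos hpos]
end
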